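/- Let ℓ, m, n ≥ 2, λ = n·lcm(ℓ,m)/lcm(ℓ,m,n), and for k = (b−1)λ + c with 1 ≤ c ≤ λ and 1 ≤ b ≤ gcd(ℓ,m), define the seed s_k = (0, b−1 mod m, ((b−1)(λ−1) + c − 1) mod n) ∈ ℤ/ℓ × ℤ/m × ℤ/n. Then the map k ↦ s_k is injective on {1, ..., ℓmn/lcm(ℓ,m,n)}. -/

import Mathlib

/-- The seed of the `k`-th block (0-indexed): for `k = b·λ + c` with `0 ≤ c < λ`,
`s_k = (0, b, b·(λ−1) + c)` where `λ = n·lcm(ℓ,m)/lcm(ℓ,m,n)`. -/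
def seed (ℓ m n : ℕ) (k : ℕ) : ZMod ℓ × ZMod m × ZMod n :=
  let lam := n * Nat.lcm ℓ m / Nat.lcm (Nat.lcm ℓ m) n
  ((0 : ZMod ℓ), ((k / lam : ℕ) : ZMod m),
    (((k / lam) * (lam - 1) + k % lam : ℕ) : ZMod n))

theorem seed_injective (ℓ m n : ℕ) (hl : 2 ≤ ℓ) (hm : 2 ≤ m) (hn : 2 ≤ n) :
    Function.Injective
      (fun k : Fin (ℓ * m * n / Nat.lcm (Nat.lcm ℓ m) n) => seed ℓ m n k.val) := by
  have hm0 : 0 < m := by omega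
  have hn0 : 0 < n := by omega
  set L := Nat.lcm ℓ m with hL
  set g := Nat.gcd L n with hg
  have hL0 : 0 < L := Nat.lcm_pos (by omega) hm0
  have hg0 : 0 < g := Nat.gcd_pos_of_pos_right _ hn0
  have hlcm0 : 0 < Nat.lcm L n := Nat.lcm_pos hL0 hn0
  have hlam : n * L / Nat.lcm L n = g := by
    have h1 : n * L = g * Nat.lcm L n := by
      rw [hg, Nat.mul_comm n L, Nat.gcd_mul_lcm]
    rw [h1, Nat.mul_div_cancel _ hlcm0]
  have hcard : ℓ * m * n / Nat.lcm L n = Nat.gcd ℓ m * g := by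
    have h1 : Nat.gcd ℓ m * g * Nat.lcm L n = ℓ * m * n := by
      rw [mul_assoc, hg, Nat.gcd_mul_lcm, ← mul_assoc, hL, Nat.gcd_mul_lcm]
    rw [← h1, Nat.mul_div_cancel _ hlcm0]
  intro k k' h
  simp only [seed, ← hL, hlam, Prod.mk.injEq] at h
  obtain ⟨-, h2, h3⟩ := h
  have hk : (k : ℕ) < Nat.gcd ℓ m * g := by rw [← hcard]; exact k.isLt
  have hk' : (k' : ℕ) < Nat.gcd ℓ m * g := by rw [← hcard]; exact k'.isLt
  have hgm : g ≤ n := Nat.le_of_dvd hn0 (Nat.gcd_dvd_right _ _)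
  have hgcdm : Nat.gcd ℓ m ≤ m := Nat.le_of_dvd hm0 (Nat.gcd_dvd_right _ _)
  have hb : k.val / g < Nat.gcd ℓ m := Nat.div_lt_of_lt_mul (hk.trans_eq (mul_comm _ _))
  have hb' : k'.val / g < Nat.gcd ℓ m := Nat.div_lt_of_lt_mul (hk'.trans_eq (mul_comm _ _))
  have hc : k.val % g < g := Nat.mod_lt _ hg0
  have hc' : k'.val % g < g := Nat.mod_lt _ hg0
  -- b = b'
  have hbeq : k.val / g = k'.val / g := by
    have := congrArg ZMod.val h2
    rwa [ZMod.val_natCast_of_lt (lt_of_lt_of_le hb hgcdm),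
      ZMod.val_natCast_of_lt (lt_of_lt_of_le hb' hgcdm)] at this
  rw [hbeq] at h3
  have hceq : k.val % g = k'.val % g := by
    push_cast at h3
    have h4 : ((k.val % g : ℕ) : ZMod n) = ((k'.val % g : ℕ) : ZMod n) :=
      add_left_cancel h3
    have := congrArg ZMod.val h4
    rwa [ZMod.val_natCast_of_lt (lt_of_lt_of_le hc hgm),
      ZMod.val_natCast_of_lt (lt_of_lt_of_le hc' hgm)] at this
  apply Fin.ext
  rw [← Nat.div_add_mod k.val g, ← Nat.div_add_mod k'.val g, hbeq, hceq]
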